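/- Let S be a finite type and e : S → S → ℕ∞ take values only in {0, 1, ω, ⊤} (with ω := 2), and assume e is idempotent for the bottleneck product, i.e. e = e ⋄ e. Write E = M(e). Let A, B ⊆ S with E(A,B) = 1. Then the following are equivalent: (a) there exists R ⊆ S with E(R,R) = 0, E(A,R) ≤ 1 and E(R,B) ≤ 1; (b) every edge (s,t) with s ∈ A, t ∉ B and e s t = 1 is stable in e. -/

import Mathlib

/-- The cut transform of a flow matrix `f : S → S → ℕ∞`:
`M(f)(A,B) = sup {f s t | s ∈ A, t ∉ B}`. -/
noncomputable def cutTransform {S : Type*} (f : S → S → ℕ∞) (A B : Set S) : ℕ∞ :=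
  ⨆ s ∈ A, ⨆ t ∈ Bᶜ, f s t

/-- The bottleneck product of two flow matrices:
`(f₁ ⋄ f₂) s t = sup_{r ∈ S} min (f₁ s r) (f₂ r t)`. -/
noncomputable def bottleneckProd {S : Type*} (f₁ f₂ : S → S → ℕ∞) (s t : S) : ℕ∞ :=
  ⨆ r : S, min (f₁ s r) (f₂ r t)

/-- An edge `(s,t)` is stable in `e` if there are no `s₀, t₀` with
`e s s₀ ≥ ω`, `e s₀ t₀ = 1` and `e t₀ t ≥ ω` (where `ω = 2`). -/
def Stable {S : Type*} (e : S → S → ℕ∞) (s t : S) : Prop :=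
  ¬ ∃ s₀ t₀ : S, 2 ≤ e s s₀ ∧ e s₀ t₀ = 1 ∧ 2 ≤ e t₀ t

lemma cut_le_elem {S : Type*} {f : S → S → ℕ∞} {A B : Set S} {s t : S}
    (hs : s ∈ A) (ht : t ∉ B) : f s t ≤ cutTransform f A B :=
  le_iSup₂_of_le s hs (le_iSup₂_of_le t ht le_rfl)

/-- For idempotent `e` with values in `{0, 1, ω, ⊤}` (`ω = 2`) and `E = M(e)` with
`E(A,B) = 1`: there is a witness `R` of stability of `(A,B)` in `E` iff every
`1`-edge from `A` to the complement of `B` is stable in `e`. -/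
theorem stability_iff {S : Type*} [Fintype S] (e : S → S → ℕ∞)
    (hval : ∀ s t : S, e s t = 0 ∨ e s t = 1 ∨ e s t = 2 ∨ e s t = ⊤)
    (hidem : e = fun s t => bottleneckProd e e s t)
    (A B : Set S) (hAB : cutTransform e A B = 1) :
    (∃ R : Set S, cutTransform e R R = 0 ∧ cutTransform e A R ≤ 1 ∧
        cutTransform e R B ≤ 1) ↔
    (∀ s ∈ A, ∀ t ∉ B, e s t = 1 → Stable e s t) := by
  have htwo_one : ¬ ((2:ℕ∞) ≤ 1) := by decide
  -- from E(A,B) = 1 : all edges from A to Bᶜ are ≤ 1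
  have hle : ∀ s ∈ A, ∀ t ∉ B, e s t ≤ 1 := fun s hs t ht => by
    have h1 : e s t ≤ cutTransform e A B := cut_le_elem hs ht
    rwa [hAB] at h1
  -- bottleneck transitivity from idempotence
  have hmin : ∀ s r t : S, min (e s r) (e r t) ≤ e s t := by
    intro s r t
    calc min (e s r) (e r t) ≤ ⨆ r, min (e s r) (e r t) :=
          le_iSup (fun r => min (e s r) (e r t)) r
    _ = e s t := (congrFun (congrFun hidem s) t).symm
  have htrans : ∀ {s r t : S} {a b : ℕ∞}, a ≤ e s r → b ≤ e r t → min a b ≤ e s t :=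
    fun {s r t a b} h1 h2 => le_trans (min_le_min h1 h2) (hmin s r t)
  constructor
  · -- (a) → (b)
    rintro ⟨R, hRR, hAR, hRB⟩ s hs t ht _het ⟨s₀, t₀, h1, h2, h3⟩
    have hs₀ : s₀ ∈ R := by
      by_contra h
      have := le_trans (le_trans h1 (cut_le_elem hs h)) hAR
      exact htwo_one this
    have ht₀ : t₀ ∉ R := by
      intro h
      have := le_trans (le_trans h3 (cut_le_elem h ht)) hRB
      exact htwo_one this
    have : e s₀ t₀ ≤ 0 := by
      have := cut_le_elem (f := e) hs₀ ht₀
      rwa [hRR] at this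
    rw [h2] at this
    exact (by decide : ¬ ((1:ℕ∞) ≤ 0)) this
  · -- (b) → (a)
    intro hstab
    refine ⟨{r | (∃ s ∈ A, 2 ≤ e s r) ∨ (∃ s ∈ A, ∃ r₀, 2 ≤ e s r₀ ∧ e r₀ r = 1)},
      ?_, ?_, ?_⟩
    · -- E(R,R) = 0
      refine le_antisymm (iSup₂_le fun r hr => iSup₂_le fun r' hr' => ?_) zero_le
      simp only [Set.mem_setOf_eq, Set.mem_compl_iff] at hr hr'
      -- show e r r' ≤ 0
      rcases hval r r' with h0 | h1 | h2 | h2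
      · exact le_of_eq h0
      all_goals exfalso
      · -- e r r' = 1
        rcases hr with ⟨s, hs, h2s⟩ | ⟨s, hs, r₀, h2s, h1s⟩
        · exact hr' (Or.inr ⟨s, hs, r, h2s, h1⟩)
        · -- e r₀ r = 1, e r r' = 1 so e r₀ r' ≥ 1
          have hg1 : (1:ℕ∞) ≤ e r₀ r' := by
            have := htrans (le_of_eq h1s.symm) (le_of_eq h1.symm)
            simpa using this
          rcases hval r₀ r' with h | h | h | h
          · rw [h] at hg1; exact (by decide : ¬ ((1:ℕ∞) ≤ 0)) hg1
          · exact hr' (Or.inr ⟨s, hs, r₀, h2s, h⟩)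
          · exact hr' (Or.inl ⟨s, hs,
              (htrans h2s (by simp [h] : (2:ℕ∞) ≤ e r₀ r')).trans' (by simp)⟩)
          · exact hr' (Or.inl ⟨s, hs,
              (htrans h2s (by simp [h] : (2:ℕ∞) ≤ e r₀ r')).trans' (by simp)⟩)
      all_goals
      · -- 2 ≤ e r r'
        have hge2 : (2:ℕ∞) ≤ e r r' := by simp [h2]
        rcases hr with ⟨s, hs, h2s⟩ | ⟨s, hs, r₀, h2s, h1s⟩
        · exact hr' (Or.inl ⟨s, hs, (htrans h2s hge2).trans' (by simp)⟩)
        · -- e r₀ r = 1 so e r₀ r' ≥ 1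
          have hg1 : (1:ℕ∞) ≤ e r₀ r' := by
            have := htrans (le_of_eq h1s.symm) hge2
            exact le_trans (by decide) this
          rcases hval r₀ r' with h | h | h | h
          · rw [h] at hg1; exact (by decide : ¬ ((1:ℕ∞) ≤ 0)) hg1
          · exact hr' (Or.inr ⟨s, hs, r₀, h2s, h⟩)
          · exact hr' (Or.inl ⟨s, hs,
              (htrans h2s (by simp [h] : (2:ℕ∞) ≤ e r₀ r')).trans' (by simp)⟩)
          · exact hr' (Or.inl ⟨s, hs,
              (htrans h2s (by simp [h] : (2:ℕ∞) ≤ e r₀ r')).trans' (by simp)⟩)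
    · -- E(A,R) ≤ 1
      refine iSup₂_le fun s hs => iSup₂_le fun r hr => ?_
      simp only [Set.mem_setOf_eq, Set.mem_compl_iff] at hr
      rcases hval s r with h | h | h | h
      · simp [h]
      · simp [h]
      · exact absurd (Or.inl ⟨s, hs, le_of_eq h.symm⟩) hr
      · exact absurd (Or.inl ⟨s, hs, h ▸ le_top⟩) hr
    · -- E(R,B) ≤ 1
      refine iSup₂_le fun r hr => iSup₂_le fun t ht => ?_
      simp only [Set.mem_setOf_eq] at hr
      rw [Set.mem_compl_iff] at ht
      rcases hval r t with h | h | h | h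
      · simp [h]
      · simp [h]
      all_goals
      · have hge2 : (2:ℕ∞) ≤ e r t := by simp [h]
        exfalso
        rcases hr with ⟨s, hs, h2s⟩ | ⟨s, hs, r₀, h2s, h1s⟩
        · have : (2:ℕ∞) ≤ e s t := (htrans h2s hge2).trans' (by simp)
          exact htwo_one (this.trans (hle s hs t ht))
        · have hrt : (1:ℕ∞) ≤ e r₀ t := by
            have := htrans (le_of_eq h1s.symm) hge2
            exact le_trans (by decide) this
          have hst : (1:ℕ∞) ≤ e s t := by
            have := htrans h2s hrt
            exact le_trans (by decide) this
          have hst1 : e s t = 1 := le_antisymm (hle s hs t ht) hst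
          exact hstab s hs t ht hst1 ⟨r₀, r, h2s, h1s, hge2⟩
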